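/- ∫₀^∞ √[8]{(x² + 8x + 8 − 4(2+x)√(1+x)) / x^{11}} dx = 4 Γ(1/4)² / (3 √(2−√2) √π). -/

import Mathlib

open Real MeasureTheory


lemma pow_frac (x : ℝ) (hx : 0 < x) (d : ℝ) (n : ℕ) :
    x ^ ((n : ℝ) * d) = (x ^ d) ^ n := by
  rw [← Real.rpow_natCast (x ^ d) n, ← Real.rpow_mul hx.le, mul_comm]

lemma rpow_mess {t u : ℝ} (ht : 0 < t) (hu : 0 < u) :
    4 * (1 + t) / u ^ 3 * ((2 * t / u) ^ ((1:ℝ)/2) / (4 * t / u ^ 2) ^ ((11:ℝ)/8))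
      = 2 ^ (-(1:ℝ)/4) * (t ^ ((1:ℝ)/8 - 1) * u ^ ((1:ℝ)/4 - 1)
          + t ^ ((9:ℝ)/8 - 1) * u ^ ((1:ℝ)/4 - 1)) := by
  have h4 : (4:ℝ) ^ ((11:ℝ)/8) = (2:ℝ) ^ ((11:ℝ)/4) := by
    rw [show (4:ℝ) = 2 ^ (2:ℕ) by norm_num, ← Real.rpow_natCast 2 2,
      ← Real.rpow_mul (by norm_num)]
    norm_num
  have hu3 : u ^ 3 = u ^ (3:ℝ) := (Real.rpow_natCast u 3).symm
  have hu2 : u ^ 2 = u ^ (2:ℝ) := (Real.rpow_natCast u 2).symm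
  rw [Real.div_rpow (by positivity) (by positivity),
      Real.div_rpow (by positivity) (by positivity),
      Real.mul_rpow (by norm_num) ht.le, Real.mul_rpow (by norm_num) ht.le,
      h4, hu3, hu2, ← Real.rpow_mul hu.le]
  have hX8 : t = (t ^ ((1:ℝ)/8)) ^ (8:ℕ) := by rw [← pow_frac t ht _ 8]; norm_num
  have hU4 : u = (u ^ ((1:ℝ)/4)) ^ (4:ℕ) := by rw [← pow_frac u hu _ 4]; norm_num
  rw [show t ^ ((1:ℝ)/2) = (t ^ ((1:ℝ)/8)) ^ (4:ℕ) from by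
        rw [← pow_frac t ht _ 4]; norm_num,
      show t ^ ((1:ℝ)/8 - 1) = t ^ ((1:ℝ)/8) / (t ^ ((1:ℝ)/8)) ^ (8:ℕ) from by
        rw [Real.rpow_sub ht, Real.rpow_one, ← hX8],
      show t ^ ((9:ℝ)/8 - 1) = t ^ ((1:ℝ)/8) from by norm_num,
      show t ^ ((11:ℝ)/8) = (t ^ ((1:ℝ)/8)) ^ (11:ℕ) from by
        rw [← pow_frac t ht _ 11]; norm_num,
      show u ^ ((2:ℝ) * (11/8)) = (u ^ ((1:ℝ)/4)) ^ (11:ℕ) from by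
        rw [← pow_frac u hu _ 11]; norm_num,
      show u ^ ((1:ℝ)/4 - 1) = u ^ ((1:ℝ)/4) / (u ^ ((1:ℝ)/4)) ^ (4:ℕ) from by
        rw [Real.rpow_sub hu, Real.rpow_one, ← hU4],
      show u ^ ((1:ℝ)/2) = (u ^ ((1:ℝ)/4)) ^ (2:ℕ) from by
        rw [← pow_frac u hu _ 2]; norm_num,
      show u ^ ((3:ℝ)) = (u ^ ((1:ℝ)/4)) ^ (12:ℕ) from by
        rw [← pow_frac u hu _ 12]; norm_num,
      show (2:ℝ) ^ (-(1:ℝ)/4) = 1 / ((2:ℝ) ^ ((1:ℝ)/4)) from by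
        rw [neg_div, Real.rpow_neg (by norm_num)]; exact (one_div _).symm,
      show (2:ℝ) ^ ((11:ℝ)/4) = ((2:ℝ) ^ ((1:ℝ)/4)) ^ (11:ℕ) from by
        rw [← pow_frac 2 (by norm_num) _ 11]; norm_num,
      show (2:ℝ) ^ ((1:ℝ)/2) = ((2:ℝ) ^ ((1:ℝ)/4)) ^ (2:ℕ) from by
        rw [← pow_frac 2 (by norm_num) _ 2]; norm_num,
      show (4:ℝ) * (1 + t) = ((2:ℝ) ^ ((1:ℝ)/4)) ^ (8:ℕ) * (1 + (t ^ ((1:ℝ)/8)) ^ (8:ℕ)) from by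
        rw [← pow_frac 2 (by norm_num) _ 8, ← hX8]; norm_num]
  have pX : (0:ℝ) < t ^ ((1:ℝ)/8) := Real.rpow_pos_of_pos ht _
  have pU : (0:ℝ) < u ^ ((1:ℝ)/4) := Real.rpow_pos_of_pos hu _
  have pW : (0:ℝ) < (2:ℝ) ^ ((1:ℝ)/4) := Real.rpow_pos_of_pos (by norm_num) _
  generalize t ^ ((1:ℝ)/8) = X at pX ⊢
  generalize u ^ ((1:ℝ)/4) = U at pU ⊢
  generalize (2:ℝ) ^ ((1:ℝ)/4) = W at pW ⊢
  field_simp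

noncomputable def gfun (y : ℝ) : ℝ := (Real.sqrt (1+y) - 1) ^ ((1:ℝ)/2) / y ^ ((11:ℝ)/8)

lemma key_alg (x : ℝ) (hx : 0 ≤ x) :
    x ^ 2 + 8 * x + 8 - 4 * (2 + x) * Real.sqrt (1 + x) = (Real.sqrt (1 + x) - 1) ^ 4 := by
  have hs : Real.sqrt (1 + x) ^ 2 = 1 + x := Real.sq_sqrt (by linarith)
  linear_combination (-(Real.sqrt (1+x))^2 + 4 * Real.sqrt (1+x) - 7 - x) * hs

lemma integrand_eq (x : ℝ) (hx : 0 < x) :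
    ((x ^ 2 + 8 * x + 8 - 4 * (2 + x) * Real.sqrt (1 + x)) / x ^ 11) ^ ((1 : ℝ) / 8)
      = gfun x := by
  have h1x : 1 ≤ Real.sqrt (1+x) := by
    have : Real.sqrt 1 ≤ Real.sqrt (1+x) := Real.sqrt_le_sqrt (by linarith)
    simpa using this
  rw [key_alg x hx.le, gfun, Real.div_rpow (by positivity) (by positivity),
    ← Real.rpow_natCast (Real.sqrt (1+x) - 1) 4, ← Real.rpow_mul (by linarith),
    ← Real.rpow_natCast x 11, ← Real.rpow_mul hx.le]
  norm_num

lemma f_image : (fun t : ℝ => 4 * t / (1 - t) ^ 2) '' Set.Ioo 0 1 = Set.Ioi 0 := by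
  ext y
  constructor
  · rintro ⟨t, ⟨h0, h1⟩, rfl⟩
    exact Set.mem_Ioi.mpr (div_pos (by linarith) (pow_pos (by linarith) 2))
  · intro hy
    rw [Set.mem_Ioi] at hy
    set s := Real.sqrt (1 + y) with hsdef
    have hs : s ^ 2 = 1 + y := Real.sq_sqrt (by linarith)
    have hs1 : 1 < s := by
      have : Real.sqrt 1 < s := Real.sqrt_lt_sqrt (by norm_num) (by linarith)
      simpa using this
    refine ⟨(s - 1) / (s + 1), ⟨div_pos (by linarith) (by linarith), ?_⟩, ?_⟩
    · rw [div_lt_one (by linarith)]; linarith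
    · have hs1' : s + 1 ≠ 0 := by linarith
      have h1 : 1 - (s - 1) / (s + 1) = 2 / (s + 1) := by
        field_simp
        norm_num
      show 4 * ((s - 1) / (s + 1)) / (1 - (s - 1) / (s + 1)) ^ 2 = y
      rw [h1]
      field_simp
      linear_combination 4 * hs

lemma f_inj : Set.InjOn (fun t : ℝ => 4 * t / (1 - t) ^ 2) (Set.Ioo 0 1) := by
  rintro a ⟨ha0, ha1⟩ b ⟨hb0, hb1⟩ h
  simp only at h
  rw [div_eq_div_iff (pow_pos (by linarith : (0:ℝ) < 1 - a) 2).ne' (pow_pos (by linarith : (0:ℝ) < 1 - b) 2).ne'] at h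
  have key : (a - b) * (1 - a * b) = 0 := by linear_combination h / 4
  rcases mul_eq_zero.mp key with h' | h'
  · linarith
  · nlinarith

lemma f_deriv (t : ℝ) (ht : t ∈ Set.Ioo (0:ℝ) 1) :
    HasDerivWithinAt (fun t : ℝ => 4 * t / (1 - t) ^ 2)
      (4 * (1 + t) / (1 - t) ^ 3) (Set.Ioo 0 1) t := by
  obtain ⟨h0, h1⟩ := ht
  have hne : (1 - t) ^ 2 ≠ 0 := (pow_pos (by linarith : (0:ℝ) < 1 - t) 2).ne'
  have hd := (((hasDerivAt_id t).const_mul 4).div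
      ((((hasDerivAt_id t).const_sub 1).pow 2)) hne)
  refine hd.hasDerivWithinAt.congr_deriv ?_
  have h1t : (1:ℝ) - t ≠ 0 := by intro hc; linarith [hc]
  norm_num
  field_simp
  ring

lemma point_eq (t : ℝ) (ht : t ∈ Set.Ioo (0:ℝ) 1) :
    |4 * (1 + t) / (1 - t) ^ 3| • gfun (4 * t / (1 - t) ^ 2)
      = 2 ^ (-(1:ℝ)/4) * (t ^ ((1:ℝ)/8 - 1) * (1 - t) ^ ((1:ℝ)/4 - 1))
        + 2 ^ (-(1:ℝ)/4) * (t ^ ((9:ℝ)/8 - 1) * (1 - t) ^ ((1:ℝ)/4 - 1)) := by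
  obtain ⟨h0, h1⟩ := ht
  have hu : (0:ℝ) < 1 - t := by linarith
  have habs : |4 * (1 + t) / (1 - t) ^ 3| = 4 * (1 + t) / (1 - t) ^ 3 :=
    abs_of_pos (div_pos (by linarith) (pow_pos hu 3))
  have hsq : Real.sqrt (1 + 4 * t / (1 - t) ^ 2) = (1 + t) / (1 - t) := by
    rw [show (1:ℝ) + 4 * t / (1 - t) ^ 2 = ((1 + t) / (1 - t)) ^ 2 from by
      field_simp; ring]
    exact Real.sqrt_sq (by positivity)
  have hsub : (1 + t) / (1 - t) - 1 = 2 * t / (1 - t) := by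
    field_simp
    ring
  rw [smul_eq_mul, habs, gfun, hsq, hsub, ← mul_add]
  exact rpow_mess h0 hu

lemma gamma_final :
    (2:ℝ) ^ (-(1:ℝ)/4) * (Gamma ((1:ℝ)/8) * Gamma ((1:ℝ)/4) / Gamma ((1:ℝ)/8 + (1:ℝ)/4))
      + (2:ℝ) ^ (-(1:ℝ)/4) * (Gamma ((9:ℝ)/8) * Gamma ((1:ℝ)/4) / Gamma ((9:ℝ)/8 + (1:ℝ)/4))
      = 4 * Gamma (1/4) ^ 2 / (3 * Real.sqrt (2 - Real.sqrt 2) * Real.sqrt π) := by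
  have h18 : Gamma ((9:ℝ)/8) = (1/8) * Gamma ((1:ℝ)/8) := by
    rw [show (9:ℝ)/8 = 1/8 + 1 by norm_num, Real.Gamma_add_one (by norm_num)]
  have h118 : Gamma ((9:ℝ)/8 + (1:ℝ)/4) = (3/8) * Gamma ((3:ℝ)/8) := by
    rw [show (9:ℝ)/8 + (1:ℝ)/4 = 3/8 + 1 by norm_num, Real.Gamma_add_one (by norm_num)]
  have h38 : ((1:ℝ)/8 + (1:ℝ)/4) = (3:ℝ)/8 := by norm_num
  have dup := Real.Gamma_mul_Gamma_add_half (1/8)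
  norm_num at dup
  have refl1 := Real.Gamma_mul_Gamma_one_sub (3/8)
  norm_num at refl1
  have p1 : 0 < Gamma ((1:ℝ)/8) := Real.Gamma_pos_of_pos (by norm_num)
  have p2 : 0 < Gamma ((1:ℝ)/4) := Real.Gamma_pos_of_pos (by norm_num)
  have p3 : 0 < Gamma ((3:ℝ)/8) := Real.Gamma_pos_of_pos (by norm_num)
  have p5 : 0 < Gamma ((5:ℝ)/8) := Real.Gamma_pos_of_pos (by norm_num)
  have hsin : Real.sin (π * (3/8)) = Real.sqrt (2 + Real.sqrt 2) / 2 := by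
    rw [show π * (3/8) = π/2 - π/8 by ring, Real.sin_pi_div_two_sub, Real.cos_pi_div_eight]
  rw [hsin] at refl1
  have hsqrt2 : Real.sqrt 2 * Real.sqrt 2 = 2 := Real.mul_self_sqrt (by norm_num)
  have hs2lt : Real.sqrt 2 < 2 := by nlinarith [Real.sqrt_nonneg 2]
  have hB : 0 < Real.sqrt (2 + Real.sqrt 2) := Real.sqrt_pos.mpr (by positivity)
  have hA : 0 < Real.sqrt (2 - Real.sqrt 2) := Real.sqrt_pos.mpr (by linarith)
  have hsp : 0 < Real.sqrt π := Real.sqrt_pos.mpr Real.pi_pos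
  have hspsq : Real.sqrt π * Real.sqrt π = π := Real.mul_self_sqrt Real.pi_pos.le
  have hABs : Real.sqrt (2 - Real.sqrt 2) * Real.sqrt (2 + Real.sqrt 2) = Real.sqrt 2 := by
    rw [← Real.sqrt_mul (by linarith)]
    rw [show (2 - Real.sqrt 2) * (2 + Real.sqrt 2) = 2 from by nlinarith [hsqrt2]]
  have refl' : Gamma ((3:ℝ)/8) * Gamma ((5:ℝ)/8) * Real.sqrt (2 + Real.sqrt 2) = 2 * π := by
    rw [refl1]
    field_simp
  have hPQ : (2:ℝ) ^ (-(1:ℝ)/4) * (2:ℝ) ^ ((3:ℝ)/4) = Real.sqrt 2 := by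
    rw [← Real.rpow_add (by norm_num : (0:ℝ) < 2),
      show (-(1:ℝ)/4 + 3/4) = 1/2 by norm_num, ← Real.sqrt_eq_rpow]
  have hP : 0 < (2:ℝ) ^ (-(1:ℝ)/4) := Real.rpow_pos_of_pos (by norm_num) _
  have key : (2:ℝ) ^ (-(1:ℝ)/4) * Real.sqrt (2 - Real.sqrt 2) * Real.sqrt π
        * Gamma ((1:ℝ)/8) * Gamma ((1:ℝ)/4)
      = Gamma ((1:ℝ)/4) ^ 2 * Gamma ((3:ℝ)/8) := by
    have e1 : Gamma ((1:ℝ)/8) = Gamma ((1:ℝ)/4) * (2:ℝ) ^ ((3:ℝ)/4) * Real.sqrt π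
        / Gamma ((5:ℝ)/8) := by
      rw [eq_div_iff p5.ne']
      linear_combination dup
    have e3 : Gamma ((3:ℝ)/8) = 2 * π / (Real.sqrt (2 + Real.sqrt 2) * Gamma ((5:ℝ)/8)) := by
      rw [eq_div_iff (by positivity)]
      linear_combination refl'
    rw [e1, e3]
    field_simp
    rw [neg_div] at hPQ
    linear_combination 1 *
      (Real.sqrt (2 - Real.sqrt 2) * Real.sqrt (2 + Real.sqrt 2) * (Real.sqrt π * Real.sqrt π) * hPQ
        + Real.sqrt 2 * (Real.sqrt π * Real.sqrt π) * hABs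
        + (Real.sqrt π * Real.sqrt π) * hsqrt2 + 2 * hspsq)
  rw [h38, h18, h118]
  field_simp
  rw [neg_div] at key
  have key2 : (2:ℝ) ^ (-((1:ℝ)/4)) * Real.sqrt (2 - Real.sqrt 2) * Real.sqrt π * Gamma ((1:ℝ)/8)
      = Gamma ((1:ℝ)/4) * Gamma ((3:ℝ)/8) := by
    apply mul_right_cancel₀ p2.ne'
    linear_combination key
  linear_combination 4 * key2

lemma cplx_eq {a b : ℝ} (t : ℝ) (ht : t ∈ Set.Ioo (0:ℝ) 1) :
    ((t ^ (a-1) * (1-t) ^ (b-1) : ℝ) : ℂ) = (t:ℂ) ^ ((a:ℂ)-1) * ((1:ℂ)-t) ^ ((b:ℂ)-1) := by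
  obtain ⟨h0, h1⟩ := ht
  push_cast
  rw [Complex.ofReal_cpow h0.le, Complex.ofReal_cpow (by linarith : (0:ℝ) ≤ 1 - t)]
  push_cast
  ring_nf

lemma beta_integrable {a b : ℝ} (ha : 0 < a) (hb : 0 < b) :
    IntegrableOn (fun t : ℝ => t ^ (a-1) * (1-t) ^ (b-1)) (Set.Ioo 0 1) := by
  have h := Complex.betaIntegral_convergent (u := (a:ℂ)) (v := (b:ℂ)) (by simpa) (by simpa)
  have h' : IntegrableOn (fun t : ℝ => (t:ℂ) ^ ((a:ℂ)-1) * ((1:ℂ)-t) ^ ((b:ℂ)-1))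
      (Set.Ioo 0 1) := ((intervalIntegrable_iff_integrableOn_Ioc_of_le zero_le_one).mp h).mono_set
        Set.Ioo_subset_Ioc_self
  have h2 : IntegrableOn (fun t : ℝ => ((t ^ (a-1) * (1-t) ^ (b-1) : ℝ) : ℂ)) (Set.Ioo 0 1) :=
    h'.congr_fun (fun t ht => (cplx_eq t ht).symm) measurableSet_Ioo
  simpa [IntegrableOn] using h2.re

lemma beta_eval {a b : ℝ} (ha : 0 < a) (hb : 0 < b) :
    ∫ t in Set.Ioo (0:ℝ) 1, t ^ (a-1) * (1-t) ^ (b-1)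
      = Gamma a * Gamma b / Gamma (a + b) := by
  have hab : Real.Gamma (a + b) ≠ 0 := (Real.Gamma_pos_of_pos (by linarith)).ne'
  have key := Complex.Gamma_mul_Gamma_eq_betaIntegral (s := (a:ℂ)) (t := (b:ℂ))
    (by simpa) (by simpa)
  have hbeta : Complex.betaIntegral a b = ((∫ t in Set.Ioo (0:ℝ) 1,
      t ^ (a-1) * (1-t) ^ (b-1) : ℝ) : ℂ) := by
    rw [Complex.betaIntegral, intervalIntegral.integral_of_le zero_le_one,
      MeasureTheory.integral_Ioc_eq_integral_Ioo,
      setIntegral_congr_fun measurableSet_Ioo (fun t ht => (cplx_eq t ht).symm)]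
    exact integral_ofReal
  rw [hbeta, ← Complex.ofReal_add, Complex.Gamma_ofReal, Complex.Gamma_ofReal,
    Complex.Gamma_ofReal, ← Complex.ofReal_mul, ← Complex.ofReal_mul] at key
  have key' := Complex.ofReal_inj.mp key
  field_simp
  linarith [key']

theorem stmt_7 :
    ∫ x in Set.Ioi (0 : ℝ),
        ((x ^ 2 + 8 * x + 8 - 4 * (2 + x) * Real.sqrt (1 + x)) / x ^ 11) ^ ((1 : ℝ) / 8) =
      4 * Real.Gamma (1 / 4) ^ 2 / (3 * Real.sqrt (2 - Real.sqrt 2) * Real.sqrt π) := by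
  rw [setIntegral_congr_fun measurableSet_Ioi (fun x hx => integrand_eq x hx)]
  rw [← f_image, integral_image_eq_integral_abs_deriv_smul measurableSet_Ioo f_deriv f_inj gfun]
  rw [setIntegral_congr_fun measurableSet_Ioo (fun t ht => point_eq t ht)]
  rw [MeasureTheory.integral_add
    ((beta_integrable (by norm_num : (0:ℝ) < 1/8) (by norm_num : (0:ℝ) < 1/4)).const_mul _)
    ((beta_integrable (by norm_num : (0:ℝ) < 9/8) (by norm_num : (0:ℝ) < 1/4)).const_mul _),
    MeasureTheory.integral_const_mul, MeasureTheory.integral_const_mul,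
    beta_eval (by norm_num : (0:ℝ) < 1/8) (by norm_num : (0:ℝ) < 1/4),
    beta_eval (by norm_num : (0:ℝ) < 9/8) (by norm_num : (0:ℝ) < 1/4)]
  exact gamma_final
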